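/- For every t > 0 the series φ'_eff(t) := Σ_{k=1}^∞ k²·φ'(kt) converges (where φ'(s) = 1/sinh²(πs) − 2πs·cosh(πs)/sinh³(πs) is the derivative of φ), and as t → 0⁺ one has t³·φ'_eff(t) → −1/(3π); that is, φ'_eff(t) ∼ −1/(3πt³) as t → 0. -/

import Mathlib

open Real Filter

/-- The derivative of the wall-interaction force `φ(s) = s/sinh²(πs)`, namely
`φ'(s) = 1/sinh²(πs) − 2πs·cosh(πs)/sinh³(πs)`. -/
noncomputable def phi' (s : ℝ) : ℝ :=
  1 / (Real.sinh (Real.pi * s)) ^ 2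
    - 2 * Real.pi * s * Real.cosh (Real.pi * s) / (Real.sinh (Real.pi * s)) ^ 3

noncomputable def psi (s : ℝ) : ℝ := s ^ 2 * phi' s

lemma sinh_lb {x : ℝ} (hx : 0 < x) : x / 2 * Real.exp (x / 2) ≤ Real.sinh x := by
  have h1 : Real.sinh x = 2 * Real.sinh (x / 2) * Real.cosh (x / 2) := by
    rw [← Real.sinh_two_mul]; ring_nf
  have h2 : x / 2 ≤ Real.sinh (x / 2) := Real.self_le_sinh_iff.2 (by linarith)
  have h3 : Real.exp (x / 2) / 2 ≤ Real.cosh (x / 2) := by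
    rw [Real.cosh_eq]
    have := Real.exp_pos (-(x/2))
    linarith
  have h4 : (0:ℝ) < Real.exp (x / 2) / 2 := by positivity
  nlinarith [Real.sinh_pos_iff.2 (show 0 < x/2 by linarith)]

set_option maxHeartbeats 1000000 in
lemma psi_bound {s : ℝ} (hs : 0 < s) : |psi s| ≤ 10 * Real.exp (-s) := by
  have hpi := Real.pi_gt_three
  set x := Real.pi * s with hxdef
  have hx : 0 < x := by positivity
  set S := Real.sinh x with hSdef
  have hS : 0 < S := Real.sinh_pos_iff.2 hx
  have hlb : x / 2 * Real.exp (x / 2) ≤ S := sinh_lb hx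
  have hlbpos : (0:ℝ) < x / 2 * Real.exp (x / 2) := by positivity
  have hcosh : Real.cosh x = S + Real.exp (-x) := by
    have := Real.cosh_sub_sinh x; linarith
  have hexpsq : Real.exp (x/2) * Real.exp (x/2) = Real.exp x := by
    rw [← Real.exp_add]; ring_nf
  have hS2 : Real.pi^2 * s^2 / 4 * Real.exp x ≤ S^2 := by
    have h := mul_le_mul hlb hlb hlbpos.le hS.le
    have e1 : (x/2 * Real.exp (x/2)) * (x/2 * Real.exp (x/2))
        = Real.pi^2 * s^2/4 * (Real.exp (x/2) * Real.exp (x/2)) := by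
      rw [hxdef]; ring
    rw [e1, hexpsq] at h
    nlinarith [h]
  have hexp32 : Real.exp (x/2) * Real.exp (x/2) * Real.exp (x/2) = Real.exp (3*x/2) := by
    rw [← Real.exp_add, ← Real.exp_add]; ring_nf
  have hS3 : Real.pi^3 * s^3 / 8 * Real.exp (3*x/2) ≤ S^3 := by
    have h := mul_le_mul (mul_le_mul hlb hlb hlbpos.le hS.le) hlb hlbpos.le (by positivity)
    have e1 : (x/2 * Real.exp (x/2)) * (x/2 * Real.exp (x/2)) * (x/2 * Real.exp (x/2))
        = Real.pi^3 * s^3/8 * (Real.exp (x/2) * Real.exp (x/2) * Real.exp (x/2)) := by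
      rw [hxdef]; ring
    rw [e1, hexp32] at h
    nlinarith [h]
  have hE := Real.exp_pos (-s)
  -- b1 : pi^2 s^2 <= 4 exp(-s) S^2
  have hx1 : (1:ℝ) ≤ Real.exp (-s) * Real.exp x := by
    rw [← Real.exp_add]
    apply Real.one_le_exp
    nlinarith
  have m1 := mul_le_mul_of_nonneg_left hS2 hE.le
  have m2 := mul_le_mul_of_nonneg_left hx1 (show (0:ℝ) ≤ Real.pi^2*s^2/4 by positivity)
  have b1 : Real.pi^2 * s^2 ≤ 4 * (Real.exp (-s) * S^2) := by linarith [m1, m2]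
  have hx2 : (1:ℝ) + 2*s ≤ Real.exp (-s) * Real.exp x := by
    rw [← Real.exp_add]
    have := Real.add_one_le_exp (-s + x)
    have : -s + x ≥ 2*s := by rw [hxdef]; nlinarith
    have := Real.add_one_le_exp (-s + x)
    linarith
  have m2' := mul_le_mul_of_nonneg_left hx2 (show (0:ℝ) ≤ Real.pi^2*s^2/4 by positivity)
  have b2 : Real.pi^2 * s^3 ≤ 2 * (Real.exp (-s) * S^2) := by
    linarith [m1, m2', sq_nonneg (Real.pi*s)]
  have hx3 : Real.exp (-x) ≤ Real.exp (-s) * Real.exp (3*x/2) := by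
    rw [← Real.exp_add]
    apply Real.exp_le_exp.2
    nlinarith
  have m3 := mul_le_mul_of_nonneg_left hS3 hE.le
  have m4 := mul_le_mul_of_nonneg_left hx3 (show (0:ℝ) ≤ 2*Real.pi^3*s^3 by positivity)
  have b3 : 2 * Real.pi^3 * s^3 * Real.exp (-x) ≤ 16 * (Real.exp (-s) * S^3) := by
    linarith [m3, m4]
  -- split psi
  have hsplit : psi s = s^2/S^2 - 2*Real.pi*s^3/S^2 - 2*Real.pi*s^3*Real.exp (-x)/S^3 := by
    rw [psi, phi', hcosh, ← hxdef, ← hSdef]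
    field_simp
    ring
  have hS2pos : (0:ℝ) < S^2 := by positivity
  have hS3pos : (0:ℝ) < S^3 := by positivity
  have hpi2 : (9:ℝ) ≤ Real.pi^2 := by nlinarith [hpi]
  have t1 : s^2/S^2 ≤ 4/9 * Real.exp (-s) := by
    rw [div_le_iff₀ hS2pos]
    have h9 := mul_le_mul_of_nonneg_right hpi2 (sq_nonneg s)
    linarith [b1, h9]
  have t2 : 2*Real.pi*s^3/S^2 ≤ 3 * Real.exp (-s) := by
    rw [div_le_iff₀ hS2pos]
    have hs3 : (0:ℝ) < s^3 := by positivity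
    have h9 := mul_le_mul_of_nonneg_right hpi2 hs3.le
    have h63 := mul_le_mul_of_nonneg_right (show 2*Real.pi ≤ (7:ℝ) by linarith [Real.pi_lt_d2]) hs3.le
    linarith [b2, h9, h63, mul_pos hE hS2pos]
  have t3 : 2*Real.pi*s^3*Real.exp (-x)/S^3 ≤ 2 * Real.exp (-s) := by
    rw [div_le_iff₀ hS3pos]
    have hm : (0:ℝ) ≤ 2*Real.pi*s^3*Real.exp (-x) := by positivity
    have h9 := mul_le_mul_of_nonneg_right hpi2 hm
    linarith [b3, h9, mul_pos hE hS3pos]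
  have p1 : (0:ℝ) ≤ s^2/S^2 := by positivity
  have p2 : (0:ℝ) ≤ 2*Real.pi*s^3/S^2 := by positivity
  have p3 : (0:ℝ) ≤ 2*Real.pi*s^3*Real.exp (-x)/S^3 := by positivity
  rw [abs_le]
  constructor
  · rw [hsplit]; linarith
  · rw [hsplit]; linarith

lemma psi_eq (t : ℝ) (k : ℕ) : psi (((k:ℝ)+1)*t) = t^2 * (((k:ℝ)+1)^2 * phi' (((k:ℝ)+1)*t)) := by
  rw [psi]; ring

lemma psi_measurable : Measurable psi := by
  unfold psi phi'
  fun_prop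

lemma psi_continuousAt {s : ℝ} (hs : 0 < s) : ContinuousAt psi s := by
  have hsinh : Real.sinh (Real.pi * s) ≠ 0 := by
    have : 0 < Real.sinh (Real.pi * s) := Real.sinh_pos_iff.2 (by positivity)
    exact this.ne'
  unfold psi phi'
  apply ContinuousAt.mul (by fun_prop)
  apply ContinuousAt.sub
  · apply ContinuousAt.div (by fun_prop) (by fun_prop)
    positivity
  · apply ContinuousAt.div (by fun_prop) (by fun_prop)
    positivity

lemma summable_psi_row {t : ℝ} (ht : 0 < t) :
    Summable (fun k : ℕ => psi (((k:ℝ)+1)*t)) := by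
  apply Summable.of_norm_bounded (g := fun k : ℕ => 10 * Real.exp (-t) ^ (k+1))
  · apply Summable.mul_left
    have h : Summable (fun k : ℕ => Real.exp (-t) ^ k) :=
      summable_geometric_of_lt_one (Real.exp_pos _).le
        (by rw [Real.exp_lt_one_iff]; linarith)
    simpa [pow_succ, mul_comm] using h.mul_right (Real.exp (-t))
  · intro k
    have hk : (0:ℝ) < ((k:ℝ)+1)*t := by positivity
    have := psi_bound hk
    calc ‖psi (((k:ℝ)+1)*t)‖ = |psi (((k:ℝ)+1)*t)| := rfl
      _ ≤ 10 * Real.exp (-(((k:ℝ)+1)*t)) := this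
      _ = 10 * Real.exp (-t) ^ (k+1) := by
          rw [← Real.exp_nat_mul]
          push_cast
          ring_nf

lemma summable_phi_row {t : ℝ} (ht : 0 < t) :
    Summable (fun k : ℕ => ((k:ℝ)+1)^2 * phi' (((k:ℝ)+1)*t)) := by
  have h := (summable_psi_row ht).mul_left (1/t^2)
  apply h.congr
  intro k
  rw [psi_eq t k]
  field_simp

lemma choose_two_cast (m : ℕ) : (((m+2).choose 2 : ℕ) : ℝ) = ((m:ℝ)+1)*((m:ℝ)+2)/2 := by
  induction m with
  | zero => norm_num
  | succ n ih =>
      have h : (n+1+2).choose 2 = (n+2).choose 2 + (n+2).choose 1 := by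
        show Nat.choose (n+2+1) 2 = _
        rw [Nat.choose_succ_succ' (n+2) 1]
        ring_nf
      rw [h]
      push_cast [ih]
      norm_num [Nat.choose_one_right]
      ring

lemma hasSum_shift_mul_geom {r : ℝ} (hr : |r| < 1) :
    HasSum (fun m : ℕ => ((m:ℝ)+1) * r^(m+1)) (r/(1-r)^2) := by
  have h0 : HasSum (fun n : ℕ => (n:ℝ) * r ^ n) (r/(1-r)^2) :=
    hasSum_coe_mul_geometric_of_norm_lt_one (by rwa [Real.norm_eq_abs])
  have h2 : HasSum (fun n : ℕ => (((n+1:ℕ)):ℝ) * r ^ (n+1)) (r/(1-r)^2) := by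
    rw [hasSum_nat_add_iff (f := fun n : ℕ => (n:ℝ) * r ^ n) 1]
    simpa using h0
  have e : (fun n : ℕ => (((n+1:ℕ)):ℝ) * r ^ (n+1)) = fun m : ℕ => ((m:ℝ)+1) * r^(m+1) := by
    funext m; push_cast; ring
  rwa [e] at h2

lemma hasSum_sq_shift_mul_geom {r : ℝ} (hr : |r| < 1) :
    HasSum (fun m : ℕ => ((m:ℝ)+1)^2 * r^(m+1)) (r*(1+r)/(1-r)^3) := by
  have hr' : ‖r‖ < 1 := by rwa [Real.norm_eq_abs]
  have habs := abs_lt.1 hr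
  have h1r : (1:ℝ) - r ≠ 0 := by intro h; linarith [habs.2]
  have hc2 : HasSum (fun m : ℕ => (((m+2).choose 2 : ℕ) : ℝ) * r ^ m) (1/(1-r)^3) :=
    hasSum_choose_mul_geometric_of_norm_lt_one 2 hr'
  have h1 : HasSum (fun m : ℕ => ((m:ℝ)+1)*((m:ℝ)+2) * r^m) (2 * (1/(1-r)^3)) := by
    have h := hc2.mul_left 2
    have e : (fun m : ℕ => 2 * ((((m+2).choose 2 : ℕ):ℝ) * r ^ m))
        = fun m : ℕ => ((m:ℝ)+1)*((m:ℝ)+2) * r^m := by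
      funext m; rw [choose_two_cast]; ring
    rwa [e] at h
  have h2 : HasSum (fun m : ℕ => ((m:ℝ)+1) * r^m) (1/(1-r)^2) := by
    have h := hasSum_choose_mul_geometric_of_norm_lt_one 1 hr'
    have e : (fun m : ℕ => (((m+1).choose 1 : ℕ):ℝ) * r ^ m)
        = fun m : ℕ => ((m:ℝ)+1) * r^m := by
      funext m; simp [Nat.choose_one_right]
    rwa [e] at h
  have h3 := (h1.sub h2).mul_left r
  have e : (fun m : ℕ => r * (((m:ℝ)+1)*((m:ℝ)+2) * r^m - ((m:ℝ)+1) * r^m))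
      = fun m : ℕ => ((m:ℝ)+1)^2 * r^(m+1) := by
    funext m; rw [pow_succ]; ring
  rw [e] at h3
  convert h3 using 1
  · rfl
  field_simp
  ring

lemma hasSum_phi' {s : ℝ} (hs : 0 < s) :
    HasSum (fun m : ℕ => (4*((m:ℝ)+1) - 8*Real.pi*s*((m:ℝ)+1)^2)
      * Real.exp (-(2*Real.pi*s))^(m+1)) (phi' s) := by
  set u := Real.exp (-(Real.pi*s)) with hudef
  have hu0 : 0 < u := Real.exp_pos _
  have hu1 : u < 1 := by
    rw [hudef, Real.exp_lt_one_iff]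
    have := Real.pi_pos
    nlinarith
  set r := Real.exp (-(2*Real.pi*s)) with hrdef
  have hru : r = u^2 := by
    rw [hrdef, hudef, ← Real.exp_nat_mul]
    norm_num
    ring_nf
  have hr0 : 0 < r := Real.exp_pos _
  have hr1 : r < 1 := by rw [hru]; nlinarith
  have hrabs : |r| < 1 := by rw [abs_of_pos hr0]; exact hr1
  have h1r : (1:ℝ) - r ≠ 0 := by linarith
  -- closed forms
  have hexp : Real.exp (Real.pi*s) = u⁻¹ := by
    rw [hudef, ← Real.exp_neg]; ring_nf
  have hsinh : Real.sinh (Real.pi*s) = (1-u^2)/(2*u) := by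
    rw [Real.sinh_eq, hexp, ← hudef]
    field_simp
  have hcosh : Real.cosh (Real.pi*s) = (1+u^2)/(2*u) := by
    rw [Real.cosh_eq, hexp, ← hudef]
    field_simp
  have hu2 : (1:ℝ) - u^2 ≠ 0 := by rw [← hru]; exact h1r
  have hphi : phi' s = 4*r/(1-r)^2 - 2*Real.pi*s*(4*r*(1+r)/(1-r)^3) := by
    rw [phi', hsinh, hcosh, hru]
    field_simp
    ring
  have hA := (hasSum_shift_mul_geom hrabs).mul_left 4
  have hB := (hasSum_sq_shift_mul_geom hrabs).mul_left (8*Real.pi*s)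
  have h := hA.sub hB
  have e : (fun m : ℕ => 4 * (((m:ℝ)+1) * r^(m+1)) - 8*Real.pi*s * (((m:ℝ)+1)^2 * r^(m+1)))
      = fun m : ℕ => (4*((m:ℝ)+1) - 8*Real.pi*s*((m:ℝ)+1)^2) * r^(m+1) := by
    funext m; ring
  rw [e] at h
  convert h using 1
  · rfl
  rw [hphi]
  field_simp
  ring

open MeasureTheory in
lemma integrableOn_pow_mul_exp (n : ℕ) {b : ℝ} (hb : 0 < b) :
    IntegrableOn (fun x : ℝ => x^n * Real.exp (-(b*x))) (Set.Ioi 0) := by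
  have h := integrableOn_rpow_mul_exp_neg_mul_rpow
    (show (-1:ℝ) < (n:ℝ) by exact lt_of_lt_of_le (by norm_num) (Nat.cast_nonneg n))
    (by norm_num : (0:ℝ) < 1) hb
  apply h.congr_fun ?_ measurableSet_Ioi
  intro x hx
  rw [Set.mem_Ioi] at hx
  simp only [Real.rpow_one, Real.rpow_natCast, neg_mul]

open MeasureTheory in
lemma integral_pow_mul_exp (n : ℕ) {b : ℝ} (hb : 0 < b) :
    ∫ x in Set.Ioi (0:ℝ), x^n * Real.exp (-(b*x)) = n.factorial / b^(n+1) := by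
  have h := Real.integral_rpow_mul_exp_neg_mul_Ioi
    (show (0:ℝ) < (n:ℝ)+1 by positivity) hb
  have e1 : ∫ t in Set.Ioi (0:ℝ), t ^ (((n:ℝ)+1) - 1) * Real.exp (-(b*t))
      = ∫ x in Set.Ioi (0:ℝ), x^n * Real.exp (-(b*x)) := by
    apply MeasureTheory.setIntegral_congr_fun measurableSet_Ioi
    intro x hx
    rw [Set.mem_Ioi] at hx
    simp only [show ((n:ℝ)+1) - 1 = (n:ℝ) by ring, Real.rpow_natCast]
  rw [e1] at h
  rw [h, Real.Gamma_nat_eq_factorial]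
  rw [show ((n:ℝ)+1) = ((n+1 : ℕ) : ℝ) by push_cast; ring, Real.rpow_natCast]
  rw [one_div, inv_pow, div_eq_mul_inv, mul_comm]

/-- the series terms for `psi` -/
noncomputable def Fm (m : ℕ) (s : ℝ) : ℝ :=
  4*((m:ℝ)+1) * (s^2 * Real.exp (-(2*Real.pi*((m:ℝ)+1)*s)))
    - 8*Real.pi*((m:ℝ)+1)^2 * (s^3 * Real.exp (-(2*Real.pi*((m:ℝ)+1)*s)))

lemma hasSum_psi {s : ℝ} (hs : 0 < s) : HasSum (fun m : ℕ => Fm m s) (psi s) := by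
  have h := (hasSum_phi' hs).mul_left (s^2)
  have e : (fun m : ℕ => s^2 * ((4*((m:ℝ)+1) - 8*Real.pi*s*((m:ℝ)+1)^2)
      * Real.exp (-(2*Real.pi*s))^(m+1))) = fun m : ℕ => Fm m s := by
    funext m
    rw [Fm, ← Real.exp_nat_mul,
      show ((m+1 : ℕ) : ℝ) * (-(2*Real.pi*s)) = -(2*Real.pi*((m:ℝ)+1)*s) by push_cast; ring]
    ring
  rw [e] at h
  exact h

open MeasureTheory in
lemma integrableOn_Fm (m : ℕ) : IntegrableOn (Fm m) (Set.Ioi 0) := by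
  have hb : (0:ℝ) < 2*Real.pi*((m:ℝ)+1) := by positivity
  exact ((integrableOn_pow_mul_exp 2 hb).const_mul (4*((m:ℝ)+1))).sub
    ((integrableOn_pow_mul_exp 3 hb).const_mul (8*Real.pi*((m:ℝ)+1)^2))

lemma integral_Fm (m : ℕ) :
    ∫ s in Set.Ioi (0:ℝ), Fm m s = -2/(Real.pi^3*((m:ℝ)+1)^2) := by
  have hb : (0:ℝ) < 2*Real.pi*((m:ℝ)+1) := by positivity
  have h2 := integral_pow_mul_exp 2 hb
  have h3 := integral_pow_mul_exp 3 hb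
  simp only [Fm]
  rw [MeasureTheory.integral_sub
    ((integrableOn_pow_mul_exp 2 hb).const_mul (4*((m:ℝ)+1)))
    ((integrableOn_pow_mul_exp 3 hb).const_mul (8*Real.pi*((m:ℝ)+1)^2)),
    MeasureTheory.integral_const_mul, MeasureTheory.integral_const_mul, h2, h3]
  have hpi := Real.pi_ne_zero
  have hm : ((m:ℝ)+1) ≠ 0 := by positivity
  norm_num [Nat.factorial]
  field_simp
  ring

lemma norm_Fm_le (m : ℕ) {s : ℝ} (hs : 0 < s) :
    ‖Fm m s‖ ≤ 4*((m:ℝ)+1) * (s^2 * Real.exp (-(2*Real.pi*((m:ℝ)+1)*s)))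
      + 8*Real.pi*((m:ℝ)+1)^2 * (s^3 * Real.exp (-(2*Real.pi*((m:ℝ)+1)*s))) := by
  rw [Fm, Real.norm_eq_abs]
  have h1 : (0:ℝ) ≤ 4*((m:ℝ)+1) * (s^2 * Real.exp (-(2*Real.pi*((m:ℝ)+1)*s))) := by positivity
  have h2 : (0:ℝ) ≤ 8*Real.pi*((m:ℝ)+1)^2 * (s^3 * Real.exp (-(2*Real.pi*((m:ℝ)+1)*s))) := by
    positivity
  rw [abs_sub_le_iff] -- |a - b| ≤ c ↔ a - b ≤ c ∧ b - a ≤ c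
  constructor <;> linarith

lemma integral_norm_Fm_le (m : ℕ) :
    ∫ s in Set.Ioi (0:ℝ), ‖Fm m s‖ ≤ 4/Real.pi^3 * (1/((m:ℝ)+1)^2) := by
  have hb : (0:ℝ) < 2*Real.pi*((m:ℝ)+1) := by positivity
  have hG : MeasureTheory.IntegrableOn (fun s : ℝ =>
      4*((m:ℝ)+1) * (s^2 * Real.exp (-(2*Real.pi*((m:ℝ)+1)*s)))
      + 8*Real.pi*((m:ℝ)+1)^2 * (s^3 * Real.exp (-(2*Real.pi*((m:ℝ)+1)*s)))) (Set.Ioi 0) :=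
    ((integrableOn_pow_mul_exp 2 hb).const_mul (4*((m:ℝ)+1))).add
      ((integrableOn_pow_mul_exp 3 hb).const_mul (8*Real.pi*((m:ℝ)+1)^2))
  have hmono := MeasureTheory.setIntegral_mono_on ((integrableOn_Fm m).norm) hG
    measurableSet_Ioi (fun s hs => norm_Fm_le m hs)
  refine hmono.trans (le_of_eq ?_)
  rw [MeasureTheory.integral_add
    ((integrableOn_pow_mul_exp 2 hb).const_mul (4*((m:ℝ)+1)))
    ((integrableOn_pow_mul_exp 3 hb).const_mul (8*Real.pi*((m:ℝ)+1)^2)),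
    MeasureTheory.integral_const_mul, MeasureTheory.integral_const_mul,
    integral_pow_mul_exp 2 hb, integral_pow_mul_exp 3 hb]
  have hpi := Real.pi_ne_zero
  have hm : ((m:ℝ)+1) ≠ 0 := by positivity
  norm_num [Nat.factorial]
  field_simp
  ring

lemma summable_inv_sq_shift : Summable (fun m : ℕ => 1/((m:ℝ)+1)^2) := by
  have h : Summable (fun n : ℕ => 1/(n:ℝ)^2) := by
    rw [Real.summable_one_div_nat_pow]
    norm_num
  have h2 := (summable_nat_add_iff (f := fun n : ℕ => 1/(n:ℝ)^2) 1).2 h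
  apply h2.congr
  intro m
  push_cast
  ring

lemma hasSum_inv_sq_shift : HasSum (fun m : ℕ => 1/((m:ℝ)+1)^2) (Real.pi^2/6) := by
  have h := hasSum_zeta_two
  have h2 := (hasSum_nat_add_iff (f := fun n : ℕ => (1:ℝ)/(n:ℝ)^2) 1).2 (by simpa using h)
  have e : (fun n : ℕ => (1:ℝ)/((n+1:ℕ):ℝ)^2) = fun m : ℕ => 1/((m:ℝ)+1)^2 := by
    funext m; push_cast; ring
  rwa [e] at h2

lemma hasSum_neg2 : HasSum (fun m : ℕ => -2/(Real.pi^3*((m:ℝ)+1)^2)) (-(1/(3*Real.pi))) := by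
  have h := hasSum_inv_sq_shift.mul_left (-2/Real.pi^3)
  have hpi := Real.pi_ne_zero
  have e : (fun m : ℕ => -2/Real.pi^3 * (1/((m:ℝ)+1)^2))
      = fun m : ℕ => -2/(Real.pi^3*((m:ℝ)+1)^2) := by
    funext m
    have hm : ((m:ℝ)+1) ≠ 0 := by positivity
    field_simp
  rw [e] at h
  convert h using 1
  · rfl
  field_simp
  ring

lemma integral_psi_eq : ∫ s in Set.Ioi (0:ℝ), psi s = -(1/(3*Real.pi)) := by
  have hsum := MeasureTheory.hasSum_integral_of_summable_integral_norm
    (μ := MeasureTheory.volume.restrict (Set.Ioi (0:ℝ))) (F := Fm)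
    (fun m => integrableOn_Fm m) ?_
  · have e1 : ∫ s in Set.Ioi (0:ℝ), (∑' m, Fm m s) = ∫ s in Set.Ioi (0:ℝ), psi s :=
      MeasureTheory.setIntegral_congr_fun measurableSet_Ioi
        (fun s hs => (hasSum_psi hs).tsum_eq)
    have e2 : (fun m : ℕ => ∫ s in Set.Ioi (0:ℝ), Fm m s)
        = fun m : ℕ => -2/(Real.pi^3*((m:ℝ)+1)^2) := by
      funext m; exact integral_Fm m
    rw [e1, e2] at hsum
    exact hsum.unique hasSum_neg2
  · apply Summable.of_nonneg_of_le
      (fun m => MeasureTheory.integral_nonneg (fun s => norm_nonneg _))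
      (fun m => integral_norm_Fm_le m)
    exact summable_inv_sq_shift.mul_left _

/-- the Riemann-sum step function -/
noncomputable def rg (t s : ℝ) : ℝ := psi (t * (⌈s / t⌉₊ : ℝ))

lemma rg_arg_pos {t s : ℝ} (ht : 0 < t) (hs : 0 < s) : s ≤ t * (⌈s / t⌉₊ : ℝ) := by
  have h := Nat.le_ceil (s / t)
  calc s = t * (s / t) := by field_simp
    _ ≤ t * (⌈s / t⌉₊ : ℝ) := by
        apply mul_le_mul_of_nonneg_left h ht.le

lemma rg_arg_lt {t s : ℝ} (ht : 0 < t) (hs : 0 < s) : t * (⌈s / t⌉₊ : ℝ) < s + t := by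
  have h := Nat.ceil_lt_add_one (show (0:ℝ) ≤ s / t by positivity)
  calc t * (⌈s / t⌉₊ : ℝ) < t * (s / t + 1) := by
        apply mul_lt_mul_of_pos_left h ht
    _ = s + t := by field_simp

lemma rg_bound {t s : ℝ} (ht : 0 < t) (hs : 0 < s) : ‖rg t s‖ ≤ 10 * Real.exp (-s) := by
  have harg : 0 < t * (⌈s / t⌉₊ : ℝ) := lt_of_lt_of_le hs (rg_arg_pos ht hs)
  have h := psi_bound harg
  rw [rg, Real.norm_eq_abs]
  refine h.trans ?_
  have : Real.exp (-(t * (⌈s / t⌉₊ : ℝ))) ≤ Real.exp (-s) := by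
    apply Real.exp_le_exp.2
    have := rg_arg_pos ht hs
    linarith
  linarith

open MeasureTheory in
lemma rg_aesm {t : ℝ} (ht : 0 < t) :
    AEStronglyMeasurable (rg t) (volume.restrict (Set.Ioi 0)) := by
  apply Measurable.aestronglyMeasurable
  apply psi_measurable.comp
  apply Measurable.const_mul
  have hmono : Monotone (fun s : ℝ => (⌈s / t⌉₊ : ℝ)) := by
    intro a b hab
    have : a / t ≤ b / t := by gcongr
    exact Nat.cast_le.2 (Nat.ceil_le_ceil this)
  exact hmono.measurable

open MeasureTheory in
lemma bound_integrable : IntegrableOn (fun s : ℝ => 10 * Real.exp (-s)) (Set.Ioi 0) := by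
  have h : IntegrableOn (fun s : ℝ => Real.exp (-(1:ℝ) * s)) (Set.Ioi (0:ℝ)) :=
    exp_neg_integrableOn_Ioi 0 one_pos
  have h2 : IntegrableOn (fun s : ℝ => Real.exp (-s)) (Set.Ioi (0:ℝ)) := by
    apply h.congr_fun ?_ measurableSet_Ioi
    intro x _; norm_num
  exact h2.const_mul 10

open MeasureTheory in
lemma rg_integrableOn {t : ℝ} (ht : 0 < t) : IntegrableOn (rg t) (Set.Ioi 0) := by
  apply Integrable.mono' bound_integrable (rg_aesm ht)
  rw [ae_restrict_iff' measurableSet_Ioi]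
  filter_upwards with s hs
  exact rg_bound ht hs

lemma ioi_eq_iUnion {t : ℝ} (ht : 0 < t) :
    Set.Ioi (0:ℝ) = ⋃ k : ℕ, Set.Ioc ((k:ℝ)*t) (((k:ℝ)+1)*t) := by
  ext s
  simp only [Set.mem_Ioi, Set.mem_iUnion, Set.mem_Ioc]
  constructor
  · intro hs
    have hpos : 0 < ⌈s / t⌉₊ := Nat.ceil_pos.2 (by positivity)
    refine ⟨⌈s / t⌉₊ - 1, ?_, ?_⟩
    · have h : (⌈s / t⌉₊ - 1 : ℕ) < ⌈s / t⌉₊ := by omega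
      have h2 : ((⌈s / t⌉₊ - 1 : ℕ) : ℝ) < s / t := Nat.lt_ceil.1 h
      calc ((⌈s / t⌉₊ - 1 : ℕ) : ℝ) * t < (s / t) * t := by gcongr
        _ = s := by field_simp
    · have h2 : ((⌈s / t⌉₊ - 1 : ℕ) : ℝ) + 1 = (⌈s / t⌉₊ : ℝ) := by
        have : 1 ≤ ⌈s / t⌉₊ := hpos
        push_cast [Nat.cast_sub this]
        ring
      rw [h2]
      calc s = (s / t) * t := by field_simp
        _ ≤ (⌈s / t⌉₊ : ℝ) * t := by gcongr; exact Nat.le_ceil _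
  · rintro ⟨k, hk1, _⟩
    have : (0:ℝ) ≤ (k:ℝ)*t := by positivity
    linarith

lemma ceil_on_Ioc {t : ℝ} (ht : 0 < t) (k : ℕ) {s : ℝ}
    (hs : s ∈ Set.Ioc ((k:ℝ)*t) (((k:ℝ)+1)*t)) : ⌈s / t⌉₊ = k + 1 := by
  obtain ⟨h1, h2⟩ := hs
  rw [Nat.ceil_eq_iff (by omega)]
  constructor
  · simp only [Nat.add_sub_cancel]
    rw [lt_div_iff₀ ht]
    exact h1
  · rw [div_le_iff₀ ht]
    push_cast
    linarith

open MeasureTheory in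
lemma integral_rg {t : ℝ} (ht : 0 < t) :
    ∫ s in Set.Ioi (0:ℝ), rg t s = ∑' k : ℕ, t * psi (((k:ℝ)+1)*t) := by
  have hdisj : Pairwise (Function.onFun Disjoint
      (fun k : ℕ => Set.Ioc ((k:ℝ)*t) (((k:ℝ)+1)*t))) := by
    intro i j hij
    rw [Function.onFun, Set.Ioc_disjoint_Ioc]
    rcases lt_or_gt_of_ne hij with h | h
    · have hij' : ((i:ℝ)+1) ≤ (j:ℝ) := by exact_mod_cast h
      calc min (((i:ℝ)+1)*t) (((j:ℝ)+1)*t) ≤ ((i:ℝ)+1)*t := min_le_left _ _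
        _ ≤ (j:ℝ)*t := by gcongr
        _ ≤ max ((i:ℝ)*t) ((j:ℝ)*t) := le_max_right _ _
    · have hij' : ((j:ℝ)+1) ≤ (i:ℝ) := by exact_mod_cast h
      calc min (((i:ℝ)+1)*t) (((j:ℝ)+1)*t) ≤ ((j:ℝ)+1)*t := min_le_right _ _
        _ ≤ (i:ℝ)*t := by gcongr
        _ ≤ max ((i:ℝ)*t) ((j:ℝ)*t) := le_max_left _ _
  have hint : IntegrableOn (rg t) (⋃ k : ℕ, Set.Ioc ((k:ℝ)*t) (((k:ℝ)+1)*t)) := by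
    rw [← ioi_eq_iUnion ht]
    exact rg_integrableOn ht
  have h := integral_iUnion (fun k => measurableSet_Ioc) hdisj hint
  rw [← ioi_eq_iUnion ht] at h
  rw [h]
  congr 1
  funext k
  have e : ∀ s ∈ Set.Ioc ((k:ℝ)*t) (((k:ℝ)+1)*t), rg t s = psi (((k:ℝ)+1)*t) := by
    intro s hs
    rw [rg, ceil_on_Ioc ht k hs]
    push_cast
    ring_nf
  rw [setIntegral_congr_fun measurableSet_Ioc e, setIntegral_const]
  rw [Real.volume_real_Ioc, show ((k:ℝ)+1)*t - (k:ℝ)*t = t by ring, max_eq_left ht.le]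
  rw [smul_eq_mul]

open MeasureTheory in
lemma rg_tendsto :
    Tendsto (fun t : ℝ => ∫ s in Set.Ioi (0:ℝ), rg t s)
      (nhdsWithin 0 (Set.Ioi 0)) (nhds (∫ s in Set.Ioi (0:ℝ), psi s)) := by
  apply tendsto_integral_filter_of_dominated_convergence (fun s => 10 * Real.exp (-s))
  · filter_upwards [self_mem_nhdsWithin] with t ht
    exact rg_aesm ht
  · filter_upwards [self_mem_nhdsWithin] with t ht
    rw [ae_restrict_iff' measurableSet_Ioi]
    filter_upwards with s hs
    exact rg_bound ht hs
  · exact bound_integrable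
  · rw [ae_restrict_iff' measurableSet_Ioi]
    filter_upwards with s hs
    have hinner : Tendsto (fun t : ℝ => t * (⌈s / t⌉₊ : ℝ))
        (nhdsWithin 0 (Set.Ioi 0)) (nhds s) := by
      apply tendsto_of_tendsto_of_tendsto_of_le_of_le'
        (tendsto_const_nhds : Tendsto (fun _ : ℝ => s) _ (nhds s))
        (show Tendsto (fun t : ℝ => s + t) (nhdsWithin 0 (Set.Ioi 0)) (nhds s) by
          have : Tendsto (fun t : ℝ => s + t) (nhds 0) (nhds (s + 0)) :=
            tendsto_const_nhds.add tendsto_id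
          rw [add_zero] at this
          exact this.mono_left nhdsWithin_le_nhds)
      · filter_upwards [self_mem_nhdsWithin] with t ht
        exact rg_arg_pos ht hs
      · filter_upwards [self_mem_nhdsWithin] with t ht
        exact (rg_arg_lt ht hs).le
    exact ((psi_continuousAt hs).tendsto).comp hinner

/-- For every `t > 0` the series `φ'_eff(t) = Σ_{k=1}^∞ k²·φ'(kt)` converges, and
`t³·φ'_eff(t) → −1/(3π)` as `t → 0⁺`, i.e. `φ'_eff(t) ∼ −1/(3πt³)` near `0`. -/
theorem stmt12 :
    (∀ t : ℝ, 0 < t → Summable (fun k : ℕ => ((k : ℝ) + 1) ^ 2 * phi' (((k : ℝ) + 1) * t))) ∧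
    Tendsto (fun t : ℝ => t ^ 3 * ∑' k : ℕ, ((k : ℝ) + 1) ^ 2 * phi' (((k : ℝ) + 1) * t))
      (nhdsWithin 0 (Set.Ioi 0)) (nhds (-(1 / (3 * Real.pi)))) := by
  constructor
  · exact fun t ht => summable_phi_row ht
  · have key := rg_tendsto
    rw [integral_psi_eq] at key
    apply key.congr'
    filter_upwards [self_mem_nhdsWithin] with t ht
    rw [integral_rg ht]
    have e : (fun k : ℕ => t * psi (((k:ℝ)+1)*t))
        = fun k : ℕ => t^3 * (((k:ℝ)+1)^2 * phi' (((k:ℝ)+1)*t)) := by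
      funext k
      rw [psi_eq]
      ring
    rw [e, tsum_mul_left]
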